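/- arXiv:1211.2340 — 5 statements merged into one kernel-verified Lean document; each statement's English description precedes it below -/
import Mathlib

section
/- For all subsets G, H ⊆ B, N(G·H) = N(G)·N(H), where G·H denotes the setwise product {gh : g ∈ G, h ∈ H} and N(S) = {e ∈ B : ∃ b ∈ S, e⁻ = b⁺}. -/
open Pointwise

/-- Left-state homomorphism of a subdirect product `B ≤ Σ × A × Σ`. -/
def leftHom {S A : Type*} [Group S] [Group A] (B : Subgroup (S × A × S)) :
    ↥B →* S :=
  (MonoidHom.fst S (A × S)).comp B.subtype

/-- Right-state homomorphism of a subdirect product `B ≤ Σ × A × Σ`. -/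
def rightHom {S A : Type*} [Group S] [Group A] (B : Subgroup (S × A × S)) :
    ↥B →* S :=
  ((MonoidHom.snd A S).comp (MonoidHom.snd S (A × S))).comp B.subtype

/-- The next-branch set of a subset of branches. -/
def nextSet {S A : Type*} [Group S] [Group A] (B : Subgroup (S × A × S))
    (H : Set ↥B) : Set ↥B :=
  {e : ↥B | ∃ b ∈ H, leftHom B e = rightHom B b}

theorem stmt3 {S A : Type*} [Group S] [Group A] (B : Subgroup (S × A × S))
    (h1 : ∀ s : S, ∃ b ∈ B, b.1 = s)
    (h2 : ∀ a : A, ∃ b ∈ B, b.2.1 = a)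
    (h3 : ∀ s : S, ∃ b ∈ B, b.2.2 = s) :
    ∀ G H : Set ↥B, nextSet B (G * H) = nextSet B G * nextSet B H := by
  intro G H
  ext e
  simp only [nextSet, Set.mem_setOf_eq, Set.mem_mul]
  constructor
  · rintro ⟨b, ⟨g, hg, h, hh, rfl⟩, he⟩
    obtain ⟨b1, hb1, hb1l⟩ := h1 (rightHom B g)
    refine ⟨⟨b1, hb1⟩, ⟨g, hg, hb1l⟩, ⟨b1, hb1⟩⁻¹ * e, ⟨h, hh, ?_⟩, by group⟩
    have : leftHom B ⟨b1, hb1⟩ = rightHom B g := hb1l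
    rw [map_mul, map_inv, this, he, map_mul]
    group
  · rintro ⟨e1, ⟨g, hg, hg'⟩, e2, ⟨h, hh, hh'⟩, rfl⟩
    exact ⟨g * h, ⟨g, hg, h, hh, rfl⟩, by rw [map_mul, map_mul, hg', hh']⟩
end

section
/- The twisted product ⊗ makes the set X₀ × X₁ × ⋯ × X_ℓ into a group: each component (x ⊗ y)_j lies in X_j (so ⊗ is well-defined), ⊗ is associative, the tuple (1, …, 1) is a two-sided identity, and every tuple has a two-sided inverse. -/
/-- `tailProd x j = S_j(x) = x_{j+1} x_{j+2} ⋯ x_ℓ` (with `tailProd x ℓ = 1`). -/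
def tailProd {B : Type*} [Group B] {n : ℕ} (x : Fin n → B) (j : Fin n) : B :=
  ((List.ofFn x).drop ((j : ℕ) + 1)).prod

/-- The twisted product: `(x ⊗ y)_j = x_j · S_j(x) y_j S_j(x)⁻¹`. -/
def twmul {B : Type*} [Group B] {n : ℕ} (x y : Fin n → B) : Fin n → B :=
  fun j => x j * (tailProd x j * y j * (tailProd x j)⁻¹)

lemma tailProd_one {B : Type*} [Group B] {n : ℕ} (j : Fin n) :
    tailProd (fun _ : Fin n => (1 : B)) j = 1 := by
  unfold tailProd
  apply List.prod_eq_one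
  intro a ha
  rcases List.mem_ofFn.mp (List.mem_of_mem_drop ha) with ⟨i, rfl⟩
  rfl

lemma tp_mul_aux {B : Type*} [Group B] {n : ℕ} (x y : Fin n → B) :
    ∀ m k : ℕ, n ≤ k + 1 + m →
      ((List.ofFn (twmul x y)).drop (k + 1)).prod
        = ((List.ofFn x).drop (k + 1)).prod * ((List.ofFn y).drop (k + 1)).prod := by
  intro m
  induction m with
  | zero =>
      intro k hk
      rw [List.drop_eq_nil_of_le (by simpa using hk),
          List.drop_eq_nil_of_le (by simpa using hk),
          List.drop_eq_nil_of_le (by simpa using hk)]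
      simp
  | succ m ih =>
      intro k hk
      by_cases h : n ≤ k + 1
      · rw [List.drop_eq_nil_of_le (by simpa using h),
            List.drop_eq_nil_of_le (by simpa using h),
            List.drop_eq_nil_of_le (by simpa using h)]
        simp
      · push_neg at h
        have h1 : k + 1 < (List.ofFn (twmul x y)).length := by simpa using h
        have h2 : k + 1 < (List.ofFn x).length := by simpa using h
        have h3 : k + 1 < (List.ofFn y).length := by simpa using h
        rw [List.drop_eq_getElem_cons h1, List.drop_eq_getElem_cons h2,
            List.drop_eq_getElem_cons h3]
        simp only [List.getElem_ofFn, List.prod_cons]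
        rw [ih (k + 1) (by omega)]
        simp only [twmul, tailProd]
        group

lemma tailProd_twmul {B : Type*} [Group B] {n : ℕ} (x y : Fin n → B) (j : Fin n) :
    tailProd (twmul x y) j = tailProd x j * tailProd y j := by
  have := tp_mul_aux x y (n - j - 1) j (by omega)
  simpa [tailProd] using this

theorem stmt9 {B : Type*} [Group B] (ℓ : ℕ) (X : Fin (ℓ + 1) → Subgroup B)
    (hmono : ∀ j k : Fin (ℓ + 1), j ≤ k → X j ≤ X k)
    (htop : X (Fin.last ℓ) = ⊤)
    (hnorm : ∀ j : Fin (ℓ + 1), (X j).Normal) :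
    -- closure: the twisted product is well defined on X₀ × X₁ × ⋯ × X_ℓ
    (∀ x y : Fin (ℓ + 1) → B, (∀ j, x j ∈ X j) → (∀ j, y j ∈ X j) →
        ∀ j, twmul x y j ∈ X j) ∧
    -- associativity
    (∀ x y z : Fin (ℓ + 1) → B, twmul (twmul x y) z = twmul x (twmul y z)) ∧
    -- two-sided identity
    (∀ x : Fin (ℓ + 1) → B,
        twmul (fun _ => (1 : B)) x = x ∧ twmul x (fun _ => (1 : B)) = x) ∧
    -- two-sided inverses
    (∀ x : Fin (ℓ + 1) → B, (∀ j, x j ∈ X j) →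
        ∃ y : Fin (ℓ + 1) → B, (∀ j, y j ∈ X j) ∧
          twmul x y = (fun _ => (1 : B)) ∧ twmul y x = (fun _ => (1 : B))) := by
  refine ⟨?_, ?_, ?_, ?_⟩
  · intro x y hx hy j
    exact mul_mem (hx j) ((hnorm j).conj_mem _ (hy j) _)
  · intro x y z
    funext j
    simp only [twmul, tailProd_twmul]
    group
  · intro x
    constructor <;> funext j <;> simp [twmul, tailProd_one]
  · intro x hx
    refine ⟨fun j => (tailProd x j)⁻¹ * (x j)⁻¹ * tailProd x j, ?_, ?_, ?_⟩
    · intro j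
      have := (hnorm j).conj_mem _ (inv_mem (hx j)) (tailProd x j)⁻¹
      simpa using this
    · funext j
      simp only [twmul]
      group
    · have hSy : ∀ j, tailProd (fun j => (tailProd x j)⁻¹ * (x j)⁻¹ * tailProd x j) j
          = (tailProd x j)⁻¹ := by
        intro j
        have h1 : twmul x (fun j => (tailProd x j)⁻¹ * (x j)⁻¹ * tailProd x j)
            = (fun _ => (1 : B)) := by
          funext j; simp only [twmul]; group
        have h2 := tailProd_twmul x (fun j => (tailProd x j)⁻¹ * (x j)⁻¹ * tailProd x j) j
        rw [h1, tailProd_one] at h2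
        exact (inv_eq_of_mul_eq_one_right h2.symm).symm
      funext j
      simp only [twmul, hSy]
      group
end

section
/- Fix g ∈ B and a tuple x with x_j ∈ X_j and x₀x₁⋯x_ℓ = g. For every h ∈ B, the map y ↦ x ⊗ y is a bijection from S_h = {y : y_j ∈ X_j, ∏ y_j = h} onto S_{gh} = {z : z_j ∈ X_j, ∏ z_j = gh}. -/
/-- The expansion class `S_g`: tuples with `x_j ∈ X_j` and `x₀x₁⋯x_ℓ = g`. -/
def expClass {B : Type*} [Group B] (ℓ : ℕ) (X : Fin (ℓ + 1) → Subgroup B)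
    (g : B) : Set (Fin (ℓ + 1) → B) :=
  {x | (∀ j, x j ∈ X j) ∧ (List.ofFn x).prod = g}

/-- The inverse of the twisted product. -/
def twinv {B : Type*} [Group B] {n : ℕ} (x z : Fin n → B) : Fin n → B :=
  fun j => (tailProd x j)⁻¹ * ((x j)⁻¹ * z j) * tailProd x j

lemma tailProd_succ {B : Type*} [Group B] {n : ℕ} (x : Fin (n + 1) → B) (j : Fin n) :
    tailProd x j.succ = tailProd (x ∘ Fin.succ) j := by
  simp only [tailProd, List.ofFn_succ, List.drop_succ_cons, Fin.val_succ]
  rfl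

lemma twmul_succ {B : Type*} [Group B] {n : ℕ} (x y : Fin (n + 1) → B) :
    (twmul x y) ∘ Fin.succ = twmul (x ∘ Fin.succ) (y ∘ Fin.succ) := by
  funext j
  simp [twmul, Function.comp, tailProd_succ]

lemma prod_twmul {B : Type*} [Group B] : ∀ {n : ℕ} (x y : Fin n → B),
    (List.ofFn (twmul x y)).prod = (List.ofFn x).prod * (List.ofFn y).prod := by
  intro n
  induction n with
  | zero => intro x y; simp
  | succ n ih =>
    intro x y
    have h0 : tailProd x 0 = (List.ofFn (x ∘ Fin.succ)).prod := by
      simp only [tailProd, List.ofFn_succ, List.drop_succ_cons, Fin.val_zero, List.drop_zero]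
      rfl
    rw [List.ofFn_succ (f := twmul x y), List.ofFn_succ (f := x), List.ofFn_succ (f := y)]
    have : List.ofFn (fun i : Fin n => twmul x y i.succ) = List.ofFn (twmul (x ∘ Fin.succ) (y ∘ Fin.succ)) := by
      rw [← twmul_succ]; rfl
    rw [List.prod_cons, List.prod_cons, List.prod_cons, this, ih]
    show twmul x y 0 * _ = _
    rw [twmul]
    have h1 : (List.ofFn fun i : Fin n => x i.succ) = List.ofFn (x ∘ Fin.succ) := rfl
    have h2 : (List.ofFn fun i : Fin n => y i.succ) = List.ofFn (y ∘ Fin.succ) := rfl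
    rw [h1, h2, h0]
    group

lemma twmul_twinv {B : Type*} [Group B] {n : ℕ} (x z : Fin n → B) :
    twmul x (twinv x z) = z := by
  funext j; simp [twmul, twinv]; group

lemma twinv_twmul {B : Type*} [Group B] {n : ℕ} (x y : Fin n → B) :
    twinv x (twmul x y) = y := by
  funext j; simp [twmul, twinv]; group

theorem stmt11 {B : Type*} [Group B] (ℓ : ℕ) (X : Fin (ℓ + 1) → Subgroup B)
    (hmono : ∀ j k : Fin (ℓ + 1), j ≤ k → X j ≤ X k)
    (htop : X (Fin.last ℓ) = ⊤)
    (hnorm : ∀ j : Fin (ℓ + 1), (X j).Normal)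
    (g h : B) (x : Fin (ℓ + 1) → B) (hx : x ∈ expClass ℓ X g) :
    Set.BijOn (fun y => twmul x y) (expClass ℓ X h) (expClass ℓ X (g * h)) := by
  obtain ⟨hxm, hxp⟩ := hx
  have hmaps : Set.MapsTo (fun y => twmul x y) (expClass ℓ X h) (expClass ℓ X (g * h)) := by
    rintro y ⟨hym, hyp⟩
    refine ⟨fun j => ?_, ?_⟩
    · exact mul_mem (hxm j) ((hnorm j).conj_mem _ (hym j) _)
    · rw [prod_twmul, hxp, hyp]
  have hmaps' : Set.MapsTo (fun z => twinv x z) (expClass ℓ X (g * h)) (expClass ℓ X h) := by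
    rintro z ⟨hzm, hzp⟩
    refine ⟨fun j => ?_, ?_⟩
    · have : (x j)⁻¹ * z j ∈ X j := mul_mem (inv_mem (hxm j)) (hzm j)
      have := (hnorm j).conj_mem _ this (tailProd x j)⁻¹
      simpa [twinv, mul_assoc] using this
    · have := prod_twmul x (twinv x z)
      rw [twmul_twinv, hzp, hxp] at this
      rw [eq_comm, ← inv_mul_eq_iff_eq_mul] at this
      rw [← this]; group
  exact Set.InvOn.bijOn ⟨fun y _ => twinv_twmul x y, fun z _ => twmul_twinv x z⟩ hmaps hmaps'
end

section
/- Let A₀, …, A_ℓ be nonempty finite sets. The number of bijective upper-triangular self-maps of ∏_{j=0}^{ℓ} A_j (maps whose j-th component depends only on coordinates j, j+1, …, ℓ) equals ∏_{j=0}^{ℓ} (|A_j|!)^{m_j}, where m_j = ∏_{i=j+1}^{ℓ} |A_i| for j < ℓ and m_ℓ = 1. -/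
section Aux

variable {ℓ : ℕ} {A : Fin (ℓ + 1) → Type*} [∀ j, Fintype (A j)] [∀ j, Nonempty (A j)]

/-- Descending strong induction on `Fin (ℓ+1)`. -/
theorem stmt16_revInd {P : Fin (ℓ + 1) → Prop}
    (H : ∀ j, (∀ i, j < i → P i) → P j) : ∀ j, P j := by
  have main : ∀ n : ℕ, ∀ j : Fin (ℓ + 1), ℓ - j.val < n → P j := by
    intro n
    induction n with
    | zero => intro j h; omega
    | succ n ih =>
      intro j hj
      apply H
      intro i hi
      apply ih
      have h1 : j.val < i.val := hi
      have h2 : i.val < ℓ + 1 := i.isLt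
      omega
  intro j
  exact main (ℓ + 1) j (by omega)

/-- Key lemma: a bijective upper-triangular map is "injective from level j on". -/
theorem stmt16_key (φ : (∀ j, A j) → (∀ j, A j))
    (htri : ∀ (a b : ∀ j, A j) (j : Fin (ℓ + 1)),
      (∀ i, j ≤ i → a i = b i) → φ a j = φ b j)
    (hbij : Function.Bijective φ) (j : Fin (ℓ + 1)) (u v : ∀ i, A i)
    (h : ∀ i, j ≤ i → φ u i = φ v i) : ∀ i, j ≤ i → u i = v i := by
  classical
  set T := ∀ i : {i : Fin (ℓ + 1) // j ≤ i}, A i with hT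
  let e : T → ∀ i, A i := fun t i => if h : j ≤ i then t ⟨i, h⟩ else Classical.arbitrary (A i)
  let r : (∀ i, A i) → T := fun a i => a i.1
  let ψ : T → T := fun t (i : {i : Fin (ℓ + 1) // j ≤ i}) => φ (e t) i.1
  have claim1 : ∀ w : ∀ i, A i, ψ (r w) = fun i : {i : Fin (ℓ + 1) // j ≤ i} => φ w i.1 := by
    intro w
    funext i
    apply htri
    intro k hk
    have : j ≤ k := le_trans i.2 hk
    simp only [e, r, dif_pos this]
  have hsurj : Function.Surjective ψ := by
    intro t
    obtain ⟨c, hc⟩ := hbij.surjective (e t)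
    refine ⟨r c, ?_⟩
    rw [claim1]
    funext i
    rw [hc]
    simp only [e, dif_pos i.2]
  have hinj : Function.Injective ψ := Finite.injective_iff_surjective.mpr hsurj
  have : r u = r v := by
    apply hinj
    rw [claim1, claim1]
    funext i
    exact h i.1 i.2
  intro i hi
  exact congrFun this ⟨i, hi⟩

end Aux


theorem stmt16 (ℓ : ℕ) (A : Fin (ℓ + 1) → Type*)
    [∀ j, Fintype (A j)] [∀ j, Nonempty (A j)] :
    Nat.card {φ : (∀ j, A j) → (∀ j, A j) //
        (∀ (a b : ∀ j, A j) (j : Fin (ℓ + 1)),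
          (∀ i, j ≤ i → a i = b i) → φ a j = φ b j) ∧
        Function.Bijective φ} =
      ∏ j : Fin (ℓ + 1),
        (Nat.factorial (Fintype.card (A j))) ^
          ∏ i ∈ Finset.univ.filter (fun i : Fin (ℓ + 1) => j < i),
            Fintype.card (A i) := by
  classical
  set G := ∀ j : Fin (ℓ + 1), ((∀ i : {i : Fin (ℓ + 1) // j < i}, A i) → (A j ≃ A j)) with hG
  -- the map from families of permutations to triangular bijections
  let Fmap : G → ((∀ j, A j) → (∀ j, A j)) :=
    fun g a j => g j (fun i => a i.1) (a j)
  have Ftri : ∀ g : G, ∀ (a b : ∀ j, A j) (j : Fin (ℓ + 1)),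
      (∀ i, j ≤ i → a i = b i) → Fmap g a j = Fmap g b j := by
    intro g a b j hab
    have ht : (fun i : {i : Fin (ℓ+1) // j < i} => a i.1) = (fun i : {i : Fin (ℓ+1) // j < i} => b i.1) := by
      funext i; exact hab i.1 (le_of_lt i.2)
    simp only [Fmap, ht, hab j le_rfl]
  have Finj : ∀ g : G, Function.Injective (Fmap g) := by
    intro g a b hab
    funext j
    induction j using stmt16_revInd with
    | H j ih =>
      have ht : (fun i : {i : Fin (ℓ+1) // j < i} => a i.1) = (fun i : {i : Fin (ℓ+1) // j < i} => b i.1) := by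
        funext i; exact ih i.1 i.2
      have := congrFun hab j
      simp only [Fmap, ht] at this
      exact (g j (fun i => b i.1)).injective this
  have Fbij : ∀ g : G, Function.Bijective (Fmap g) :=
    fun g => ⟨Finj g, Finite.injective_iff_surjective.mp (Finj g)⟩
  let F : G → {φ : (∀ j, A j) → (∀ j, A j) //
      (∀ (a b : ∀ j, A j) (j : Fin (ℓ + 1)),
        (∀ i, j ≤ i → a i = b i) → φ a j = φ b j) ∧ Function.Bijective φ} :=
    fun g => ⟨Fmap g, Ftri g, Fbij g⟩
  have hFbij : Function.Bijective F := by
    constructor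
    · intro g g' hgg
      have h1 : Fmap g = Fmap g' := congrArg Subtype.val hgg
      funext j t
      ext x
      let a : ∀ i, A i := fun i =>
        if h : j < i then t ⟨i, h⟩ else if h' : i = j then h' ▸ x else Classical.arbitrary (A i)
      have haj : a j = x := by simp [a]
      have hat : (fun i : {i : Fin (ℓ+1) // j < i} => a i.1) = t := by
        funext i
        simp only [a, dif_pos i.2]
      have := congrFun (congrFun h1 a) j
      simp only [Fmap, hat, haj] at this
      exact this
    · rintro ⟨φ, htri, hbij⟩
      -- for each j and tail t, the one-variable map is bijective
      let extFull : ∀ j : Fin (ℓ+1), (∀ i : {i : Fin (ℓ + 1) // j < i}, A i) → ∀ i, A i :=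
        fun j t i => if h : j < i then t ⟨i, h⟩ else Classical.arbitrary (A i)
      let p : ∀ j : Fin (ℓ+1), (∀ i : {i : Fin (ℓ + 1) // j < i}, A i) → A j → A j :=
        fun j t x => φ (Function.update (extFull j t) j x) j
      have pinj : ∀ j t, Function.Injective (p j t) := by
        intro j t x y hxy
        have key := stmt16_key φ htri hbij j
          (Function.update (extFull j t) j x) (Function.update (extFull j t) j y) ?_ j le_rfl
        · simpa using key
        · intro i hi
          rcases eq_or_lt_of_le hi with h | h
          · subst h; exact hxy
          · apply htri
            intro k hk
            have hkj : k ≠ j := by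
              intro hkj; subst hkj; exact absurd hk (not_le.mpr h)
            rw [Function.update_of_ne hkj, Function.update_of_ne hkj]
      have pbij : ∀ j t, Function.Bijective (p j t) :=
        fun j t => ⟨pinj j t, Finite.injective_iff_surjective.mp (pinj j t)⟩
      refine ⟨fun j t => Equiv.ofBijective (p j t) (pbij j t), ?_⟩
      apply Subtype.ext
      funext a j
      show p j (fun i => a i.1) (a j) = φ a j
      apply htri
      intro k hk
      rcases eq_or_lt_of_le hk with h | h
      · subst h; simp
      · have hkj : k ≠ j := by
          intro hkj; subst hkj; exact absurd hk (not_le.mpr h)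
        rw [Function.update_of_ne hkj]
        simp only [extFull, dif_pos h]
  rw [← Nat.card_eq_of_bijective F hFbij]
  rw [hG, Nat.card_pi]
  apply Finset.prod_congr rfl
  intro j _
  rw [Nat.card_fun]
  congr 1
  · rw [Nat.card_eq_fintype_card]
    exact Fintype.card_perm
  · rw [Nat.card_eq_fintype_card, Fintype.card_pi]
    exact (Finset.prod_subtype (Finset.univ.filter (fun i : Fin (ℓ+1) => j < i))
      (fun i => by simp) (fun i => Fintype.card (A i))).symm
end

section
/- Suppose X_{j-1}(X_j ∩ Y) = X_j, suppose N satisfies N(G·H) = N(G)·N(H) for subsets, N(X_{j-1}) = X_j, N(X_j) = X_{j+1}, N(X_j ∩ Y) = N(X_j) ∩ N(Y), and N(Y) = X₀·Y' for subgroups Y, Y' of B. Then X_j(X_{j+1} ∩ Y') = X_{j+1}, provided X₀ ≤ X_j ≤ X_{j+1}. -/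
open Pointwise

-- Dedekind modular law (set form): if A ≤ C then C ∩ (A·Y) = A·(C ∩ Y)
lemma dedekind_set {B : Type*} [Group B] (A C Y : Subgroup B) (hAC : A ≤ C) :
    (C : Set B) ∩ ((A : Set B) * (Y : Set B)) =
      (A : Set B) * ((C : Set B) ∩ (Y : Set B)) := by
  ext x
  constructor
  · rintro ⟨hxC, a, haA, y, hyY, rfl⟩
    exact ⟨a, haA, y, ⟨by simpa using (mul_mem (inv_mem (hAC haA)) hxC), hyY⟩, rfl⟩
  · rintro ⟨a, haA, y, ⟨hyC, hyY⟩, rfl⟩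
    exact ⟨mul_mem (hAC haA) hyC, a, haA, y, hyY, rfl⟩

-- product with a contained subgroup is absorbed
lemma absorb_set {B : Type*} [Group B] (A C : Subgroup B) (hAC : A ≤ C) :
    (C : Set B) * (A : Set B) = (C : Set B) := by
  ext x
  constructor
  · rintro ⟨c, hc, a, ha, rfl⟩
    exact mul_mem hc (hAC ha)
  · intro hx
    exact ⟨x, hx, 1, one_mem _, mul_one x⟩

theorem stmt17 {B : Type*} [Group B]
    (N : Set B → Set B)
    (X₀ Xjm Xj Xj1 Y Y' : Subgroup B)
    (h0j : X₀ ≤ Xj) (hjj1 : Xj ≤ Xj1)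
    -- the diagonal identity X_{j-1}(X_j ∩ Y) = X_j
    (hdiag : (Xjm : Set B) * ((Xj : Set B) ∩ (Y : Set B)) = (Xj : Set B))
    -- N respects setwise products
    (hmul : ∀ G H : Set B, N (G * H) = N G * N H)
    -- N shifts the X-chain
    (hNXjm : N (Xjm : Set B) = (Xj : Set B))
    (hNXj : N (Xj : Set B) = (Xj1 : Set B))
    -- N respects this intersection
    (hNint : N ((Xj : Set B) ∩ (Y : Set B)) = N (Xj : Set B) ∩ N (Y : Set B))
    -- N shifts the Y-chain: N(Y) = X₀ · Y'
    (hNY : N (Y : Set B) = (X₀ : Set B) * (Y' : Set B)) :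
    (Xj : Set B) * ((Xj1 : Set B) ∩ (Y' : Set B)) = (Xj1 : Set B) := by
  have key : (Xj : Set B) * ((Xj1 : Set B) ∩ ((X₀ : Set B) * (Y' : Set B))) = (Xj1 : Set B) := by
    have := congrArg N hdiag
    rw [hmul, hNXjm, hNint, hNXj, hNY] at this
    exact this
  rw [dedekind_set X₀ Xj1 Y' (h0j.trans hjj1), ← mul_assoc,
    absorb_set X₀ Xj h0j] at key
  exact key
end
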